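/- Let G be a simple graph, S ⊆ V a set of vertices that are pairwise closed twins, and A a vertex with N(A) = S. If θ is a second-order stationary point of the Kuramoto energy on G, then all vertices in S ∪ {A} have the same phasor: v_i = v_j for all i, j ∈ S ∪ {A}. -/

import Mathlib

open Real Classical

noncomputable section

/-- Real-valued adjacency indicator of a simple graph. -/
def adjW {V : Type*} (G : SimpleGraph V) (i j : V) : ℝ := if G.Adj i j then 1 else 0

/-- The phasor (unit vector in the plane) associated with an angle. -/
def phasor (t : ℝ) : ℝ × ℝ := (Real.cos t, Real.sin t)

/-- The Kuramoto energy. -/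
def kEnergy {V : Type*} [Fintype V] (G : SimpleGraph V) (θ : V → ℝ) : ℝ :=
  (1 / 2) * ∑ i, ∑ j, adjW G i j * (1 - Real.cos (θ i - θ j))

/-- The Hessian of the Kuramoto energy. -/
def kHess {V : Type*} [Fintype V] (G : SimpleGraph V) (θ : V → ℝ) : Matrix V V ℝ :=
  fun i j =>
    if i = j then ∑ k, adjW G i k * Real.cos (θ i - θ k)
    else -(adjW G i j * Real.cos (θ i - θ j))

/-- First-order (equilibrium) condition of the homogeneous Kuramoto model. -/
def IsEquilibrium {V : Type*} [Fintype V] (G : SimpleGraph V) (θ : V → ℝ) : Prop :=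
  ∀ i, ∑ j, adjW G i j * Real.sin (θ j - θ i) = 0

/-- Second-order stationary point of the Kuramoto energy. -/
def IsSOSP {V : Type*} [Fintype V] (G : SimpleGraph V) (θ : V → ℝ) : Prop :=
  IsEquilibrium G θ ∧ (kHess G θ).PosSemidef

/-! ### Auxiliary lemmas -/

private lemma sum_pair_support {n : ℕ} {f : Fin n → ℝ} {i j : Fin n} (hij : i ≠ j)
    (h : ∀ k, k ≠ i → k ≠ j → f k = 0) : ∑ k, f k = f i + f j := by
  have h1 : ∑ k, f k = ∑ k ∈ ({i, j} : Finset (Fin n)), f k := by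
    refine (Finset.sum_subset (Finset.subset_univ _) fun k _ hk => ?_).symm
    simp only [Finset.mem_insert, Finset.mem_singleton, not_or] at hk
    exact h k hk.1 hk.2
  rw [h1, Finset.sum_pair hij]

private lemma diag_nonneg {n : ℕ} {M : Matrix (Fin n) (Fin n) ℝ} (hM : M.PosSemidef)
    (i : Fin n) : 0 ≤ M i i := by
  simpa using hM.dotProduct_mulVec_nonneg (Pi.single i 1)

private lemma quad_pair {n : ℕ} {M : Matrix (Fin n) (Fin n) ℝ} (hM : M.PosSemidef)
    {i j : Fin n} (hij : i ≠ j) : 0 ≤ M i i - M i j - M j i + M j j := by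
  classical
  set x : Fin n → ℝ := fun k => if k = i then 1 else if k = j then -1 else 0 with hx
  have h := hM.dotProduct_mulVec_nonneg x
  have hmv : ∀ a, (M.mulVec x) a = M a i - M a j := by
    intro a
    simp only [Matrix.mulVec, dotProduct]
    rw [sum_pair_support hij (f := fun k => M a k * x k)
      (fun k h1 h2 => by simp [hx, h1, h2])]
    simp [hx, hij.symm]
    ring
  have hdot : dotProduct (star x) (M.mulVec x)
      = (M i i - M i j) - (M j i - M j j) := by
    simp only [dotProduct, Pi.star_apply, star_trivial]
    rw [sum_pair_support hij (f := fun a => x a * (M.mulVec x) a)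
      (fun k h1 h2 => by simp [hx, h1, h2])]
    simp [hx, hij.symm, hmv]
    rw [← hx, hmv, hmv]
    ring
  rw [hdot] at h
  linarith

private lemma phasor_eq_of_cos_one {a b : ℝ} (h : Real.cos (a - b) = 1) :
    phasor a = phasor b := by
  obtain ⟨m, hm⟩ := (Real.cos_eq_one_iff _).1 h
  have ha : a = b + (m : ℝ) * (2 * π) := by linarith
  rw [ha]
  unfold phasor
  rw [Real.cos_add_int_mul_two_pi, Real.sin_add_int_mul_two_pi]

/-- Two adjacent vertices with the same neighbours elsewhere synchronize at an SOSP. -/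
private lemma twin_cos_one {n : ℕ} (G : SimpleGraph (Fin n)) (θ : Fin n → ℝ)
    (hsosp : IsSOSP G θ) {i j : Fin n} (hij : i ≠ j) (hadj : G.Adj i j)
    (hsame : ∀ k, k ≠ i → k ≠ j → (G.Adj i k ↔ G.Adj j k)) :
    Real.cos (θ i - θ j) = 1 := by
  have haij : adjW G i j = 1 := if_pos hadj
  have haji : adjW G j i = 1 := if_pos hadj.symm
  have haii : adjW G i i = 0 := if_neg (G.irrefl)
  have hajj : adjW G j j = 0 := if_neg (G.irrefl)
  have hsameW : ∀ k, k ≠ i → k ≠ j → adjW G i k = adjW G j k := by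
    intro k h1 h2; unfold adjW; rw [if_congr (hsame k h1 h2) rfl rfl]
  -- equilibrium at i
  have hR : ∑ k, adjW G i k * Real.sin (θ k - θ i) = 0 := hsosp.1 i
  -- equilibrium at j, transported to weights of i
  have hT : ∑ k, adjW G i k * Real.sin (θ k - θ j) = -Real.sin (θ i - θ j) := by
    have hj := hsosp.1 j
    have hkey : ∑ k, (adjW G j k - adjW G i k) * Real.sin (θ k - θ j)
        = Real.sin (θ i - θ j) := by
      rw [sum_pair_support hij (f := fun k => (adjW G j k - adjW G i k) * Real.sin (θ k - θ j))
        (fun k h1 h2 => by simp only [hsameW k h1 h2, sub_self, zero_mul])]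
      rw [haji, haii, hajj, haij, sub_self, Real.sin_zero]
      ring
    have hexp : ∑ k, (adjW G j k - adjW G i k) * Real.sin (θ k - θ j)
        = (∑ k, adjW G j k * Real.sin (θ k - θ j))
          - ∑ k, adjW G i k * Real.sin (θ k - θ j) := by
      rw [← Finset.sum_sub_distrib]
      exact Finset.sum_congr rfl fun k _ => by ring
    rw [hexp, hj] at hkey
    linarith
  -- trig identity relating the two cosine sums
  have h3 : ∑ k, adjW G i k * Real.cos (θ i - θ k)
      = Real.cos (θ i - θ j) * (∑ k, adjW G i k * Real.cos (θ j - θ k))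
        + Real.sin (θ i - θ j) * ∑ k, adjW G i k * Real.sin (θ k - θ j) := by
    rw [Finset.mul_sum, Finset.mul_sum, ← Finset.sum_add_distrib]
    refine Finset.sum_congr rfl fun k _ => ?_
    rw [show θ i - θ k = (θ i - θ j) + (θ j - θ k) from by ring, Real.cos_add,
      show θ j - θ k = -(θ k - θ j) from by ring, Real.cos_neg, Real.sin_neg]
    ring
  have h4 : ∑ k, adjW G i k * Real.cos (θ j - θ k)
      = Real.cos (θ i - θ j) * (∑ k, adjW G i k * Real.cos (θ i - θ k))
        - Real.sin (θ i - θ j) * ∑ k, adjW G i k * Real.sin (θ k - θ i) := by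
    rw [Finset.mul_sum, Finset.mul_sum, ← Finset.sum_sub_distrib]
    refine Finset.sum_congr rfl fun k _ => ?_
    rw [show θ j - θ k = (θ i - θ k) - (θ i - θ j) from by ring, Real.cos_sub,
      show Real.sin (θ i - θ k) = -Real.sin (θ k - θ i) from by
        rw [← neg_sub (θ k) (θ i), Real.sin_neg]]
    ring
  -- Hessian entries
  have hHii : kHess G θ i i = ∑ k, adjW G i k * Real.cos (θ i - θ k) := by
    simp [kHess]
  have hHij : kHess G θ i j = -Real.cos (θ i - θ j) := by
    simp [kHess, hij, haij]
  have hHji : kHess G θ j i = -Real.cos (θ i - θ j) := by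
    simp only [kHess, if_neg hij.symm, haji, one_mul]
    rw [show θ j - θ i = -(θ i - θ j) from by ring, Real.cos_neg]
  have hHjj : kHess G θ j j
      = (∑ k, adjW G i k * Real.cos (θ j - θ k)) + Real.cos (θ i - θ j) - 1 := by
    have hdef : kHess G θ j j = ∑ k, adjW G j k * Real.cos (θ j - θ k) := by
      simp [kHess]
    have hkey : ∑ k, (adjW G j k - adjW G i k) * Real.cos (θ j - θ k)
        = Real.cos (θ i - θ j) - 1 := by
      rw [sum_pair_support hij (f := fun k => (adjW G j k - adjW G i k) * Real.cos (θ j - θ k))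
        (fun k h1 h2 => by simp only [hsameW k h1 h2, sub_self, zero_mul])]
      rw [haji, haii, hajj, haij, sub_self, Real.cos_zero,
        show θ j - θ i = -(θ i - θ j) from by ring, Real.cos_neg]
      ring
    have hexp : ∑ k, (adjW G j k - adjW G i k) * Real.cos (θ j - θ k)
        = (∑ k, adjW G j k * Real.cos (θ j - θ k))
          - ∑ k, adjW G i k * Real.cos (θ j - θ k) := by
      rw [← Finset.sum_sub_distrib]
      exact Finset.sum_congr rfl fun k _ => by ring
    rw [hexp] at hkey
    rw [hdef]
    linarith
  -- positive semidefiniteness along e_i - e_j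
  have hpsd := quad_pair hsosp.2 hij
  rw [hHii, hHij, hHji, hHjj] at hpsd
  -- final algebra
  by_cases hCeq : Real.cos (θ i - θ j) = 1
  · exact hCeq
  exfalso
  have hClt : Real.cos (θ i - θ j) < 1 := lt_of_le_of_ne (Real.cos_le_one _) hCeq
  have hpy := Real.sin_sq_add_cos_sq (θ i - θ j)
  have e1 : ∑ k, adjW G i k * Real.cos (θ i - θ k)
      = Real.cos (θ i - θ j) * (∑ k, adjW G i k * Real.cos (θ j - θ k))
        - Real.sin (θ i - θ j) ^ 2 := by
    rw [h3, hT]; ring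
  have e2 : ∑ k, adjW G i k * Real.cos (θ j - θ k)
      = Real.cos (θ i - θ j) * ∑ k, adjW G i k * Real.cos (θ i - θ k) := by
    rw [h4, hR]; ring
  have hfac : (1 - Real.cos (θ i - θ j)) *
      ((1 + Real.cos (θ i - θ j)) * ((∑ k, adjW G i k * Real.cos (θ i - θ k)) + 1)) = 0 := by
    linear_combination e1 + Real.cos (θ i - θ j) * e2 - hpy
  have h0 : (1 + Real.cos (θ i - θ j)) *
      ((∑ k, adjW G i k * Real.cos (θ i - θ k)) + 1) = 0 := by
    rcases mul_eq_zero.mp hfac with h | h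
    · linarith
    · exact h
  rcases mul_eq_zero.mp h0 with h | h
  · -- cos = -1
    have hC' : Real.cos (θ i - θ j) = -1 := by linarith
    have hQ : ∑ k, adjW G i k * Real.cos (θ j - θ k)
        = -∑ k, adjW G i k * Real.cos (θ i - θ k) := by
      rw [e2, hC']; ring
    rw [hQ, hC'] at hpsd
    linarith
  · -- P = -1
    have hP1 : ∑ k, adjW G i k * Real.cos (θ i - θ k) = -1 := by linarith
    have hQ : ∑ k, adjW G i k * Real.cos (θ j - θ k) = -Real.cos (θ i - θ j) := by
      rw [e2, hP1]; ring
    rw [hP1, hQ] at hpsd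
    linarith

theorem twin_attachment_sync
    {n : ℕ} (G : SimpleGraph (Fin n)) (θ : Fin n → ℝ)
    (S : Set (Fin n)) (A : Fin n)
    (htwin : ∀ i ∈ S, ∀ j ∈ S,
      insert i (G.neighborSet i) = insert j (G.neighborSet j))
    (hA : G.neighborSet A = S)
    (hsosp : IsSOSP G θ) :
    ∀ i ∈ insert A S, ∀ j ∈ insert A S, phasor (θ i) = phasor (θ j) := by
  classical
  -- synchronisation inside S
  have pairS : ∀ i ∈ S, ∀ j ∈ S, phasor (θ i) = phasor (θ j) := by
    intro i hi j hj
    by_cases hij : i = j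
    · rw [hij]
    have hins := htwin i hi j hj
    have hadj : G.Adj i j := by
      have hmem : j ∈ insert i (G.neighborSet i) := by
        rw [hins]; exact Set.mem_insert _ _
      rcases Set.mem_insert_iff.mp hmem with h | h
      · exact absurd h.symm hij
      · exact (SimpleGraph.mem_neighborSet G i j).mp h
    have hsame : ∀ k, k ≠ i → k ≠ j → (G.Adj i k ↔ G.Adj j k) := by
      intro k h1 h2
      have hiff : k ∈ insert i (G.neighborSet i) ↔ k ∈ insert j (G.neighborSet j) := by
        rw [hins]
      simpa [Set.mem_insert_iff, h1, h2, SimpleGraph.mem_neighborSet] using hiff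
    exact phasor_eq_of_cos_one (twin_cos_one G θ hsosp hij hadj hsame)
  -- synchronisation of A with S
  have pairA : ∀ j ∈ S, phasor (θ A) = phasor (θ j) := by
    intro j0 hj0
    have hAdjS : ∀ k, G.Adj A k ↔ k ∈ S := by
      intro k
      rw [← SimpleGraph.mem_neighborSet, hA]
    have hphase : ∀ k ∈ S, Real.cos (θ k) = Real.cos (θ j0) ∧
        Real.sin (θ k) = Real.sin (θ j0) := by
      intro k hk
      have hph := pairS k hk j0 hj0
      exact ⟨congrArg Prod.fst hph, congrArg Prod.snd hph⟩
    -- the number of neighbours of A, as a real sum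
    have hNpos : 0 < ∑ k, (if k ∈ S then (1 : ℝ) else 0) := by
      refine Finset.sum_pos' (fun k _ => by positivity) ⟨j0, Finset.mem_univ _, ?_⟩
      rw [if_pos hj0]; norm_num
    -- equilibrium at A forces sin = 0
    have hsin0 : Real.sin (θ j0 - θ A) = 0 := by
      have heq := hsosp.1 A
      have hterm : ∀ k, adjW G A k * Real.sin (θ k - θ A)
          = (if k ∈ S then (1 : ℝ) else 0) * Real.sin (θ j0 - θ A) := by
        intro k
        by_cases hk : k ∈ S
        · rw [if_pos hk, one_mul, show adjW G A k = 1 from if_pos ((hAdjS k).2 hk), one_mul]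
          rw [Real.sin_sub, Real.sin_sub, (hphase k hk).1, (hphase k hk).2]
        · rw [if_neg hk, zero_mul,
            show adjW G A k = 0 from if_neg (fun h => hk ((hAdjS k).1 h)), zero_mul]
      rw [Finset.sum_congr rfl (fun k _ => hterm k), ← Finset.sum_mul] at heq
      rcases mul_eq_zero.mp heq with h | h
      · exact absurd h (ne_of_gt hNpos)
      · exact h
    -- the Hessian diagonal at A forces cos = 1
    have hAA : kHess G θ A A
        = (∑ k, (if k ∈ S then (1 : ℝ) else 0)) * Real.cos (θ A - θ j0) := by
      have hdef : kHess G θ A A = ∑ k, adjW G A k * Real.cos (θ A - θ k) := by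
        simp [kHess]
      have hterm : ∀ k, adjW G A k * Real.cos (θ A - θ k)
          = (if k ∈ S then (1 : ℝ) else 0) * Real.cos (θ A - θ j0) := by
        intro k
        by_cases hk : k ∈ S
        · rw [if_pos hk, one_mul, show adjW G A k = 1 from if_pos ((hAdjS k).2 hk), one_mul]
          rw [Real.cos_sub, Real.cos_sub, (hphase k hk).1, (hphase k hk).2]
        · rw [if_neg hk, zero_mul,
            show adjW G A k = 0 from if_neg (fun h => hk ((hAdjS k).1 h)), zero_mul]
      rw [hdef, Finset.sum_congr rfl (fun k _ => hterm k), ← Finset.sum_mul]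
    have hd := diag_nonneg hsosp.2 A
    rw [hAA] at hd
    have hcos_nonneg : 0 ≤ Real.cos (θ A - θ j0) := by
      by_contra hneg
      push_neg at hneg
      nlinarith
    have hsinA : Real.sin (θ A - θ j0) = 0 := by
      rw [show θ A - θ j0 = -(θ j0 - θ A) from by ring, Real.sin_neg, hsin0, neg_zero]
    have hpy := Real.sin_sq_add_cos_sq (θ A - θ j0)
    have hfac : (Real.cos (θ A - θ j0) - 1) * (Real.cos (θ A - θ j0) + 1) = 0 := by
      linear_combination hpy - Real.sin (θ A - θ j0) * hsinA
    have hcos1 : Real.cos (θ A - θ j0) = 1 := by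
      rcases mul_eq_zero.mp hfac with h | h
      · linarith
      · linarith
    exact phasor_eq_of_cos_one hcos1
  intro i hi j hj
  rcases Set.mem_insert_iff.mp hi with hiA | hiS
  · rcases Set.mem_insert_iff.mp hj with hjA | hjS
    · rw [hiA, hjA]
    · rw [hiA]; exact pairA j hjS
  · rcases Set.mem_insert_iff.mp hj with hjA | hjS
    · rw [hjA]; exact (pairA i hiS).symm
    · exact pairS i hiS j hjS
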